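/- Kleinman lower bound by the Riccati solution: Let A be a real q×q matrix, B a real q×m matrix, Q real symmetric positive definite, and R real symmetric positive definite. Suppose P* is a real symmetric positive definite solution of the algebraic Riccati equation Aᵀ P* + P* A + Q − P* B R⁻¹ Bᵀ P* = 0. Let K be any real m×q matrix with A − BK Hurwitz and let P be the symmetric solution of the Lyapunov equation (A − BK)ᵀ P + P (A − BK) + Q + Kᵀ R K = 0. Then P* ⪯ P, i.e., P − P* is positive semidefinite. -/

import Mathlib

open Matrix

/-- Symmetric part of a real square matrix: `(A + Aᵀ)/2`. -/
noncomputable def symPart {n : ℕ} (A : Matrix (Fin n) (Fin n) ℝ) : Matrix (Fin n) (Fin n) ℝ :=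
  (1 / 2 : ℝ) • (A + Aᵀ)

theorem symPart_isHermitian {n : ℕ} (A : Matrix (Fin n) (Fin n) ℝ) :
    (symPart A).IsHermitian := by
  ext i j
  simp [symPart, Matrix.IsHermitian, Matrix.conjTranspose_apply, mul_comm, add_comm]
  ring

/-- Logarithmic 2-norm of a real square matrix: the largest eigenvalue of its
symmetric part `(A + Aᵀ)/2`. -/
noncomputable def mu2 {n : ℕ} (A : Matrix (Fin n) (Fin n) ℝ) : ℝ :=
  ⨆ i, (symPart_isHermitian A).eigenvalues i

/-- Spectral norm of a real matrix: the operator norm induced by the Euclidean norm. -/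
noncomputable def specNorm {m n : ℕ} (A : Matrix (Fin m) (Fin n) ℝ) : ℝ :=
  ‖LinearMap.toContinuousLinearMap (Matrix.toEuclideanLin A)‖

/-- A real square matrix is Hurwitz if every complex eigenvalue (i.e. every element of the
complex spectrum of its complexification) has strictly negative real part. -/
def IsHurwitz {n : ℕ} (A : Matrix (Fin n) (Fin n) ℝ) : Prop :=
  ∀ μ ∈ spectrum ℂ (A.map (Complex.ofReal ·)), μ.re < 0

open Filter Topology

section Aux

attribute [local instance] Matrix.linftyOpNormedRing Matrix.linftyOpNormedAlgebra

set_option maxHeartbeats 1000000 in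
/-- If every element of the spectrum of a complex matrix has norm `< 1`, its powers tend to
zero entrywise. -/
lemma matrix_pow_entry_tendsto_zero {n : ℕ} (C : Matrix (Fin n) (Fin n) ℂ)
    (h : ∀ μ ∈ spectrum ℂ C, ‖μ‖₊ < 1) (i j : Fin n) :
    Tendsto (fun k : ℕ => (C ^ k) i j) atTop (𝓝 0) := by
  haveI : Nonempty (Fin n) := ⟨i⟩
  have hρ : spectralRadius ℂ C < 1 := by
    simpa using spectrum.spectralRadius_lt_of_forall_lt (a := C) (r := 1) h
  obtain ⟨r, hρr, hr1⟩ := ENNReal.lt_iff_exists_nnreal_btwn.mp hρ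
  have hr1' : (r : ℝ) < 1 := by exact_mod_cast hr1
  have hev : ∀ᶠ k : ℕ in atTop, (‖C ^ k‖₊ : ENNReal) ^ (1/(k:ℝ)) < (r : ENNReal) :=
    (spectrum.pow_nnnorm_pow_one_div_tendsto_nhds_spectralRadius C).eventually_lt_const hρr
  have hbound : ∀ᶠ k in atTop, ‖C ^ k‖ ≤ (r : ℝ) ^ k := by
    filter_upwards [hev, eventually_ge_atTop 1] with k hk hk1
    have hk0 : (k : ℝ) ≠ 0 := Nat.cast_ne_zero.2 (Nat.one_le_iff_ne_zero.mp hk1)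
    have h2 : ((‖C ^ k‖₊ : ENNReal) ^ (1/(k:ℝ))) ^ (k:ℝ) ≤ (r : ENNReal) ^ (k:ℝ) :=
      ENNReal.rpow_le_rpow hk.le (Nat.cast_nonneg k)
    rw [← ENNReal.rpow_mul, one_div_mul_cancel hk0, ENNReal.rpow_one,
      ENNReal.rpow_natCast] at h2
    exact_mod_cast h2
  have hnorm : Tendsto (fun k => ‖C ^ k‖) atTop (𝓝 0) :=
    squeeze_zero' (Eventually.of_forall fun k => norm_nonneg _) hbound
      (tendsto_pow_atTop_nhds_zero_of_lt_one r.coe_nonneg hr1')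
  have hent : ∀ X : Matrix (Fin n) (Fin n) ℂ, ‖X i j‖ ≤ ‖X‖ := by
    intro X
    have h1 : ‖X i j‖₊ ≤ ∑ j', ‖X i j'‖₊ :=
      Finset.single_le_sum (f := fun j' => ‖X i j'‖₊) (fun _ _ => zero_le) (Finset.mem_univ j)
    have h2 : (∑ j', ‖X i j'‖₊) ≤ Finset.univ.sup (fun i' => ∑ j', ‖X i' j'‖₊) :=
      Finset.le_sup (f := fun i' => ∑ j', ‖X i' j'‖₊) (Finset.mem_univ i)
    rw [Matrix.linfty_opNorm_def]
    exact_mod_cast h1.trans h2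
  rw [tendsto_zero_iff_norm_tendsto_zero]
  exact squeeze_zero (fun k => norm_nonneg _) (fun k => hent (C ^ k)) hnorm

end Aux

/-- Eigenvalue characterization of the spectrum of a complex matrix. -/
lemma mem_spectrum_iff_eig {n : ℕ} (M : Matrix (Fin n) (Fin n) ℂ) (μ : ℂ) :
    μ ∈ spectrum ℂ M ↔ ∃ v, v ≠ 0 ∧ M *ᵥ v = μ • v := by
  have key : ∀ v, ((algebraMap ℂ (Matrix (Fin n) (Fin n) ℂ)) μ - M) *ᵥ v = μ • v - M *ᵥ v := by
    intro v
    rw [Matrix.sub_mulVec, Algebra.algebraMap_eq_smul_one, Matrix.smul_mulVec,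
      Matrix.one_mulVec]
  rw [spectrum.mem_iff, Matrix.isUnit_iff_isUnit_det, isUnit_iff_ne_zero, not_ne_iff,
    ← Matrix.exists_mulVec_eq_zero_iff]
  constructor
  · rintro ⟨v, hv, h0⟩
    refine ⟨v, hv, ?_⟩
    rw [key, sub_eq_zero] at h0
    exact h0.symm
  · rintro ⟨v, hv, h0⟩
    exact ⟨v, hv, by rw [key, h0, sub_self]⟩

/-- For a Hurwitz matrix `F`, the matrix `1 - F` is invertible and the powers of the Cayley
transform `(1 + F)(1 - F)⁻¹` tend to zero entrywise. -/
lemma hurwitz_cayley {n : ℕ} (F : Matrix (Fin n) (Fin n) ℝ) (hF : IsHurwitz F) :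
    IsUnit (1 - F).det ∧
      ∀ i j, Tendsto (fun k : ℕ => ((((1 + F) * (1 - F)⁻¹) ^ k)) i j) atTop (𝓝 (0:ℝ)) := by
  set φ := (Complex.ofRealHom.mapMatrix : Matrix (Fin n) (Fin n) ℝ →+* Matrix (Fin n) (Fin n) ℂ)
    with hφ
  have hspec : ∀ μ ∈ spectrum ℂ (φ F), μ.re < 0 := hF
  -- invertibility of 1 - F
  have hdet : IsUnit (1 - F).det := by
    rw [isUnit_iff_ne_zero]
    intro h0
    have h0c : (φ (1 - F)).det = 0 := by
      rw [← RingHom.map_det, h0, _root_.map_zero]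
    obtain ⟨v, hveq, hv⟩ := (Matrix.exists_mulVec_eq_zero_iff).mpr h0c
    have heig : (φ F) *ᵥ v = (1:ℂ) • v := by
      rw [_root_.map_sub, _root_.map_one, Matrix.sub_mulVec, Matrix.one_mulVec, sub_eq_zero] at hv
      rw [one_smul]
      exact hv.symm
    have h1 : (1:ℂ) ∈ spectrum ℂ (φ F) := (mem_spectrum_iff_eig _ _).2 ⟨v, hveq, heig⟩
    have := hspec 1 h1
    norm_num at this
  refine ⟨hdet, ?_⟩
  have hSS : (1 - F) * (1 - F)⁻¹ = 1 := Matrix.mul_nonsing_inv _ hdet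
  set Cr := (1 + F) * (1 - F)⁻¹ with hCr
  set C := φ Cr with hC
  -- every spectral value of C has norm < 1
  have hspecC : ∀ μ ∈ spectrum ℂ C, ‖μ‖₊ < 1 := by
    intro μ hμ
    obtain ⟨v, hv, hCv⟩ := (mem_spectrum_iff_eig _ _).1 hμ
    set u := (φ ((1 - F)⁻¹)) *ᵥ v with hu_def
    have hv_eq : v = (φ (1 - F)) *ᵥ u := by
      rw [hu_def, Matrix.mulVec_mulVec, ← _root_.map_mul, hSS, _root_.map_one, Matrix.one_mulVec]
    have hu : u ≠ 0 := by
      intro h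
      apply hv
      rw [hv_eq, h, Matrix.mulVec_zero]
    have hTu : (φ (1 + F)) *ᵥ u = μ • ((φ (1 - F)) *ᵥ u) := by
      have : C *ᵥ v = μ • v := hCv
      rw [hC, hCr, _root_.map_mul, ← Matrix.mulVec_mulVec, ← hu_def, hv_eq] at this
      exact this
    set G := φ F with hG
    set w := G *ᵥ u with hw
    have hTu2 : u + w = μ • u - μ • w := by
      have h1 : (φ (1 + F)) *ᵥ u = u + w := by
        rw [_root_.map_add, _root_.map_one, Matrix.add_mulVec, Matrix.one_mulVec, hw, hG]
      have h2 : (φ (1 - F)) *ᵥ u = u - w := by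
        rw [_root_.map_sub, _root_.map_one, Matrix.sub_mulVec, Matrix.one_mulVec, hw, hG]
      rw [h1, h2, smul_sub] at hTu
      exact hTu
    have hμ1 : μ ≠ -1 := by
      intro h
      apply hu
      funext idx
      have := congrFun hTu2 idx
      simp only [Pi.add_apply, Pi.sub_apply, Pi.smul_apply, smul_eq_mul, h, Pi.zero_apply] at this ⊢
      linear_combination this / 2
    have hμ1' : μ + 1 ≠ 0 := fun h => hμ1 (by linear_combination h)
    have heig : G *ᵥ u = ((μ - 1)/(μ + 1)) • u := by
      funext idx
      have := congrFun hTu2 idx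
      simp only [Pi.add_apply, Pi.sub_apply, Pi.smul_apply, smul_eq_mul, hw,
        Pi.zero_apply] at this ⊢
      field_simp
      linear_combination this
    have hlam : ((μ - 1)/(μ + 1)) ∈ spectrum ℂ G := (mem_spectrum_iff_eig _ _).2 ⟨u, hu, heig⟩
    have hre := hspec _ hlam
    have hd : 0 < Complex.normSq (μ + 1) := Complex.normSq_pos.2 hμ1'
    rw [Complex.div_re] at hre
    have hnum : (μ - 1).re * (μ + 1).re + (μ - 1).im * (μ + 1).im
        = Complex.normSq μ - 1 := by
      simp [Complex.normSq_apply, Complex.sub_re, Complex.add_re, Complex.sub_im,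
        Complex.add_im]
      ring
    have hsq : Complex.normSq μ < 1 := by
      have h2 : (Complex.normSq μ - 1) / Complex.normSq (μ + 1) < 0 := by
        rw [← hnum, add_div]; exact hre
      rcases div_neg_iff.mp h2 with ⟨h3, h4⟩ | ⟨h3, h4⟩
      · linarith
      · linarith
    have habs : ‖μ‖ < 1 := by
      have h3 : ‖μ‖ ^ 2 < 1 := by rwa [← Complex.sq_norm] at hsq
      nlinarith [norm_nonneg μ]
    exact_mod_cast habs
  intro i j
  have hCk := matrix_pow_entry_tendsto_zero C hspecC i j
  have hmap : ∀ k : ℕ, (C ^ k) i j = ((Cr ^ k) i j : ℂ) := by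
    intro k
    rw [hC, ← _root_.map_pow]
    rfl
  have h4 : Tendsto (fun k : ℕ => (((Cr ^ k) i j : ℝ) : ℂ)) atTop (𝓝 0) := by
    simpa [hmap] using hCk
  have h5 := (Complex.continuous_re.tendsto 0).comp h4
  simpa [Function.comp_def] using h5

set_option maxHeartbeats 1000000 in
/-- Kleinman lower bound by the Riccati solution: if `P*` is a symmetric
positive definite solution of the ARE `AᵀP* + P*A + Q − P*BR⁻¹BᵀP* = 0` and `P` is the
symmetric solution of the Lyapunov equation for any stabilizing gain `K`, then `P* ⪯ P`. -/
theorem kleinman_lower_bound {q m : ℕ}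
    (A : Matrix (Fin q) (Fin q) ℝ) (B : Matrix (Fin q) (Fin m) ℝ)
    (Q Pstar P : Matrix (Fin q) (Fin q) ℝ) (R : Matrix (Fin m) (Fin m) ℝ)
    (K : Matrix (Fin m) (Fin q) ℝ)
    (hQ : Q.PosDef) (hR : R.PosDef)
    (hPstar : Pstar.PosDef)
    (hARE : Aᵀ * Pstar + Pstar * A + Q - Pstar * B * R⁻¹ * Bᵀ * Pstar = 0)
    (hK : IsHurwitz (A - B * K))
    (hPsym : P.IsHermitian)
    (hLyap : (A - B * K)ᵀ * P + P * (A - B * K) + Q + Kᵀ * R * K = 0) :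
    (P - Pstar).PosSemidef := by
  -- opaque names
  obtain ⟨F, hF⟩ : ∃ X, X = A - B * K := ⟨_, rfl⟩
  obtain ⟨D, hD⟩ : ∃ X, X = P - Pstar := ⟨_, rfl⟩
  obtain ⟨L, hL⟩ : ∃ X, X = K - R⁻¹ * Bᵀ * Pstar := ⟨_, rfl⟩
  rw [← hF] at hK hLyap
  -- basic symmetry facts
  have hRdet : IsUnit R.det := hR.det_pos.ne'.isUnit
  have hRT : Rᵀ = R := by
    rw [← Matrix.conjTranspose_eq_transpose_of_trivial R]; exact hR.isHermitian
  have hRiT : R⁻¹ᵀ = R⁻¹ := by rw [Matrix.transpose_nonsing_inv, hRT]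
  have hPstT : Pstarᵀ = Pstar := by
    rw [← Matrix.conjTranspose_eq_transpose_of_trivial Pstar]; exact hPstar.isHermitian
  have hPT : Pᵀ = P := by
    rw [← Matrix.conjTranspose_eq_transpose_of_trivial P]; exact hPsym
  have hRR : R * R⁻¹ = 1 := Matrix.mul_nonsing_inv _ hRdet
  have hR'R : R⁻¹ * R = 1 := Matrix.nonsing_inv_mul _ hRdet
  have hcol1 : ∀ X : Matrix (Fin m) (Fin q) ℝ, R * (R⁻¹ * X) = X := fun X => by
    rw [← Matrix.mul_assoc, hRR, Matrix.one_mul]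
  have hcol2 : ∀ X : Matrix (Fin m) (Fin q) ℝ, R⁻¹ * (R * X) = X := fun X => by
    rw [← Matrix.mul_assoc, hR'R, Matrix.one_mul]
  -- the key Lyapunov-type equation for D
  have hKey : Fᵀ * D + D * F + Lᵀ * (R * L)
      = ((A - B * K)ᵀ * P + P * (A - B * K) + Q + Kᵀ * R * K)
        - (Aᵀ * Pstar + Pstar * A + Q - Pstar * B * R⁻¹ * Bᵀ * Pstar) := by
    rw [hF, hD, hL]
    simp only [Matrix.transpose_sub, Matrix.transpose_mul, Matrix.transpose_transpose,
      hRiT, hRT, hPstT, hPT]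
    simp only [Matrix.sub_mul, Matrix.mul_sub, Matrix.add_mul, Matrix.mul_add]
    simp only [Matrix.mul_assoc, hcol1, hcol2]
    abel
  rw [← hF, hLyap, hARE, sub_zero] at hKey
  obtain ⟨M2, hM2def⟩ : ∃ X, X = Lᵀ * (R * L) := ⟨_, rfl⟩
  rw [← hM2def] at hKey
  have hE : Fᵀ * D + D * F = -M2 := by
    linear_combination (norm := abel) hKey
  -- positive semidefiniteness of the forcing term
  have hM2 : M2.PosSemidef := by
    have h := hR.posSemidef.conjTranspose_mul_mul_same L
    rw [Matrix.conjTranspose_eq_transpose_of_trivial, Matrix.mul_assoc, ← hM2def] at h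
    exact h
  -- Cayley transform
  obtain ⟨hdet, hent⟩ := hurwitz_cayley F hK
  obtain ⟨S, hS⟩ : ∃ X, X = 1 - F := ⟨_, rfl⟩
  obtain ⟨T, hT⟩ : ∃ X, X = 1 + F := ⟨_, rfl⟩
  rw [← hS] at hdet
  obtain ⟨Cr, hCrdef⟩ : ∃ X, X = T * S⁻¹ := ⟨_, rfl⟩
  have hent' : ∀ i j, Filter.Tendsto (fun k : ℕ => (Cr ^ k) i j) Filter.atTop (𝓝 (0:ℝ)) := by
    simp only [hCrdef, hT, hS]
    exact hent
  have hSS : S * S⁻¹ = 1 := Matrix.mul_nonsing_inv _ hdet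
  have hS'S : S⁻¹ * S = 1 := Matrix.nonsing_inv_mul _ hdet
  have hSiT : (S⁻¹)ᵀ = (Sᵀ)⁻¹ := Matrix.transpose_nonsing_inv _
  have hSTdet : IsUnit (Sᵀ).det := by rwa [Matrix.det_transpose]
  have hSTS : Sᵀ * (Sᵀ)⁻¹ = 1 := Matrix.mul_nonsing_inv _ hSTdet
  have h'STS : (Sᵀ)⁻¹ * Sᵀ = 1 := Matrix.nonsing_inv_mul _ hSTdet
  have hDT : Dᵀ = D := by rw [hD, Matrix.transpose_sub, hPT, hPstT]
  -- middle identity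
  have hmid : Tᵀ * D * T = Sᵀ * D * S - (M2 + M2) := by
    have h2 : Tᵀ * D * T = Sᵀ * D * S + ((Fᵀ * D + D * F) + (Fᵀ * D + D * F)) := by
      rw [hT, hS, Matrix.transpose_add, Matrix.transpose_sub, Matrix.transpose_one]
      noncomm_ring
    rw [hE] at h2
    rw [h2]
    abel
  obtain ⟨N, hNdef⟩ : ∃ X, X = (Sᵀ)⁻¹ * (M2 + M2) * S⁻¹ := ⟨_, rfl⟩
  have hN : N.PosSemidef := by
    have h := (hM2.add hM2).conjTranspose_mul_mul_same S⁻¹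
    rwa [Matrix.conjTranspose_eq_transpose_of_trivial, hSiT, ← hNdef] at h
  have hCrD : Crᵀ * D * Cr = D - N := by
    calc Crᵀ * D * Cr = (Sᵀ)⁻¹ * (Tᵀ * D * T) * S⁻¹ := by
          rw [hCrdef, Matrix.transpose_mul, hSiT]; noncomm_ring
      _ = (Sᵀ)⁻¹ * (Sᵀ * D * S) * S⁻¹ - (Sᵀ)⁻¹ * (M2 + M2) * S⁻¹ := by
          rw [hmid]; noncomm_ring
      _ = D - N := by
          have h3 : (Sᵀ)⁻¹ * (Sᵀ * D * S) * S⁻¹ = ((Sᵀ)⁻¹ * Sᵀ) * D * (S * S⁻¹) := by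
            noncomm_ring
          rw [h3, h'STS, hSS, Matrix.one_mul, Matrix.mul_one, hNdef]
  have hDeq : D = Crᵀ * D * Cr + N := by rw [hCrD]; abel
  -- conclude positive semidefiniteness
  rw [← hD]
  refine Matrix.PosSemidef.of_dotProduct_mulVec_nonneg ?_ ?_
  · rw [hD]; exact hPsym.sub hPstar.isHermitian
  intro x
  rw [star_trivial]
  have step : ∀ y : Fin q → ℝ, (Cr *ᵥ y) ⬝ᵥ (D *ᵥ (Cr *ᵥ y)) ≤ y ⬝ᵥ (D *ᵥ y) := by
    intro y
    have hpsd := hN.dotProduct_mulVec_nonneg y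
    rw [star_trivial] at hpsd
    have expand : y ⬝ᵥ (D *ᵥ y) = (Cr *ᵥ y) ⬝ᵥ (D *ᵥ (Cr *ᵥ y)) + y ⬝ᵥ (N *ᵥ y) := by
      conv_lhs => rw [hDeq]
      rw [Matrix.add_mulVec, dotProduct_add]
      congr 1
      rw [Matrix.mul_assoc, ← Matrix.mulVec_mulVec, Matrix.dotProduct_mulVec,
        Matrix.vecMul_transpose, ← Matrix.mulVec_mulVec]
    rw [expand]
    linarith
  have mono : ∀ k : ℕ, ((Cr ^ k) *ᵥ x) ⬝ᵥ (D *ᵥ ((Cr ^ k) *ᵥ x)) ≤ x ⬝ᵥ (D *ᵥ x) := by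
    intro k
    induction k with
    | zero => simp [Matrix.one_mulVec]
    | succ k ih =>
        have h := step ((Cr ^ k) *ᵥ x)
        rw [Matrix.mulVec_mulVec, ← pow_succ'] at h
        exact h.trans ih
  -- the quadratic form along the discrete trajectory tends to zero
  have hy : Filter.Tendsto (fun k : ℕ => (Cr ^ k) *ᵥ x) Filter.atTop (𝓝 0) := by
    rw [tendsto_pi_nhds]
    intro i
    have h5 : Filter.Tendsto (fun k : ℕ => ∑ j, (Cr ^ k) i j * x j) Filter.atTop
        (𝓝 (∑ j : Fin q, 0 * x j)) :=
      tendsto_finset_sum _ fun j _ => (hent' i j).mul_const (x j)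
    simpa [Matrix.mulVec, dotProduct] using h5
  have hg : Continuous fun y : Fin q → ℝ => y ⬝ᵥ (D *ᵥ y) :=
    continuous_id.dotProduct (continuous_const.matrix_mulVec continuous_id)
  have hg0 : Filter.Tendsto (fun y : Fin q → ℝ => y ⬝ᵥ (D *ᵥ y)) (𝓝 0) (𝓝 0) :=
    hg.tendsto' 0 0 (by simp)
  have hlim : Filter.Tendsto
      (fun k : ℕ => ((Cr ^ k) *ᵥ x) ⬝ᵥ (D *ᵥ ((Cr ^ k) *ᵥ x))) Filter.atTop (𝓝 0) :=
    hg0.comp hy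
  exact le_of_tendsto hlim (Filter.Eventually.of_forall mono)
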